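/- Let Δx, Δt > 0, let U = (−π, π) × (−π, π) ⊂ ℝ², and define h : U → ℝ² by h(x,y) = (h₁(x,y), h₂(x,y)) with h₁(x,y) = 4 sin(x/2) / (Δx (cos(x/2) + cos(y/2))) and h₂(x,y) = 4 sin(y/2) / (Δt (cos(x/2) + cos(y/2))). Then h is injective on U, h is differentiable at every point of U, and the determinant of its Jacobian (the 2×2 matrix of partial derivatives) is nonzero at every point of U; consequently h is a diffeomorphism from U onto its image h(U). -/

import Mathlib

open Real

noncomputable def hone (Δx x y : ℝ) : ℝ :=
  4 * Real.sin (x / 2) / (Δx * (Real.cos (x / 2) + Real.cos (y / 2)))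

noncomputable def htwo (Δt x y : ℝ) : ℝ :=
  4 * Real.sin (y / 2) / (Δt * (Real.cos (x / 2) + Real.cos (y / 2)))

/-- The frequency map `h = (h₁, h₂)` of the simple diamond scheme. -/
noncomputable def hmap (Δx Δt : ℝ) (p : ℝ × ℝ) : ℝ × ℝ :=
  (hone Δx p.1 p.2, htwo Δt p.1 p.2)

lemma sqrt_key {s₁ s₂ c₁ c₂ : ℝ} (h1 : s₁^2 + c₁^2 = 1) (h2 : s₂^2 + c₂^2 = 1)
    (hc : 0 < c₁ + c₂) :
    Real.sqrt ((1 + (s₁/(c₁+c₂) - s₂/(c₁+c₂))^2) * (1 + (s₁/(c₁+c₂) + s₂/(c₁+c₂))^2)) =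
      2/(c₁+c₂) := by
  have hc' : (c₁ + c₂) ≠ 0 := hc.ne'
  have hprod : ((c₁+c₂)^2 + (s₁-s₂)^2) * ((c₁+c₂)^2+(s₁+s₂)^2) = 4*(c₁+c₂)^2 := by
    linear_combination (4*c₂*(c₁+c₂) + s₁^2+c₁^2-s₂^2-c₂^2) * h1 +
      (4*c₁*(c₁+c₂) + s₂^2+c₂^2-s₁^2-c₁^2) * h2
  have e1 : 1 + (s₁/(c₁+c₂) - s₂/(c₁+c₂))^2 = ((c₁+c₂)^2 + (s₁-s₂)^2)/(c₁+c₂)^2 := by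
    field_simp
  have e2 : 1 + (s₁/(c₁+c₂) + s₂/(c₁+c₂))^2 = ((c₁+c₂)^2 + (s₁+s₂)^2)/(c₁+c₂)^2 := by
    field_simp
  have key : (1 + (s₁/(c₁+c₂) - s₂/(c₁+c₂))^2) * (1 + (s₁/(c₁+c₂) + s₂/(c₁+c₂))^2)
      = (2/(c₁+c₂))^2 := by
    rw [e1, e2, div_mul_div_comm, hprod, div_pow]
    field_simp
    ring
  rw [key, Real.sqrt_sq (by positivity)]


noncomputable def ginv (Δx Δt : ℝ) (q : ℝ × ℝ) : ℝ × ℝ :=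
  (2 * Real.arcsin (Δx * q.1 / 4 *
      (2 / Real.sqrt ((1 + (Δx * q.1 / 4 - Δt * q.2 / 4)^2) * (1 + (Δx * q.1 / 4 + Δt * q.2 / 4)^2)))),
   2 * Real.arcsin (Δt * q.2 / 4 *
      (2 / Real.sqrt ((1 + (Δx * q.1 / 4 - Δt * q.2 / 4)^2) * (1 + (Δx * q.1 / 4 + Δt * q.2 / 4)^2)))))

lemma cos_half_pos {x : ℝ} (hx : x ∈ Set.Ioo (-π) π) : 0 < Real.cos (x/2) :=
  Real.cos_pos_of_mem_Ioo ⟨by linarith [hx.1], by linarith [hx.2]⟩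

lemma key_vals (Δx Δt : ℝ) (hΔx : 0 < Δx) (hΔt : 0 < Δt) {p : ℝ × ℝ}
    (hp : p ∈ Set.Ioo (-π) π ×ˢ Set.Ioo (-π) π) :
    Δx * (hmap Δx Δt p).1 / 4 *
      (2 / Real.sqrt ((1 + (Δx * (hmap Δx Δt p).1 / 4 - Δt * (hmap Δx Δt p).2 / 4)^2) *
        (1 + (Δx * (hmap Δx Δt p).1 / 4 + Δt * (hmap Δx Δt p).2 / 4)^2))) = Real.sin (p.1/2) ∧
    Δt * (hmap Δx Δt p).2 / 4 *
      (2 / Real.sqrt ((1 + (Δx * (hmap Δx Δt p).1 / 4 - Δt * (hmap Δx Δt p).2 / 4)^2) *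
        (1 + (Δx * (hmap Δx Δt p).1 / 4 + Δt * (hmap Δx Δt p).2 / 4)^2))) = Real.sin (p.2/2) := by
  obtain ⟨hp1, hp2⟩ := hp
  have hc1 : 0 < Real.cos (p.1/2) := cos_half_pos hp1
  have hc2 : 0 < Real.cos (p.2/2) := cos_half_pos hp2
  have hc : 0 < Real.cos (p.1/2) + Real.cos (p.2/2) := by linarith
  have hA : Δx * (hmap Δx Δt p).1 / 4 = Real.sin (p.1/2) / (Real.cos (p.1/2) + Real.cos (p.2/2)) := by
    simp only [hmap, hone]
    field_simp
  have hB : Δt * (hmap Δx Δt p).2 / 4 = Real.sin (p.2/2) / (Real.cos (p.1/2) + Real.cos (p.2/2)) := by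
    simp only [hmap, htwo]
    field_simp
  rw [hA, hB, sqrt_key (Real.sin_sq_add_cos_sq (p.1/2)) (Real.sin_sq_add_cos_sq (p.2/2)) hc]
  constructor <;> field_simp

lemma ginv_hmap (Δx Δt : ℝ) (hΔx : 0 < Δx) (hΔt : 0 < Δt) {p : ℝ × ℝ}
    (hp : p ∈ Set.Ioo (-π) π ×ˢ Set.Ioo (-π) π) :
    ginv Δx Δt (hmap Δx Δt p) = p := by
  obtain ⟨h1, h2⟩ := key_vals Δx Δt hΔx hΔt hp
  simp only [ginv, h1, h2]
  have e1 : Real.arcsin (Real.sin (p.1/2)) = p.1/2 :=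
    Real.arcsin_sin (by linarith [hp.1.1]) (by linarith [hp.1.2])
  have e2 : Real.arcsin (Real.sin (p.2/2)) = p.2/2 :=
    Real.arcsin_sin (by linarith [hp.2.1]) (by linarith [hp.2.2])
  rw [e1, e2]
  ext <;> simp <;> ring
lemma half_hasDerivAt (x : ℝ) : HasDerivAt (fun x : ℝ => x / 2) (1/2) x := by
  simpa using (hasDerivAt_id x).div_const 2

lemma den_hasDerivAt_x (Δ y : ℝ) (x : ℝ) :
    HasDerivAt (fun x => Δ * (Real.cos (x/2) + Real.cos (y/2)))
      (Δ * (-Real.sin (x/2) * (1/2))) x := by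
  have h := ((Real.hasDerivAt_cos (x/2)).comp x (half_hasDerivAt x)).add_const (Real.cos (y/2))
  exact h.const_mul Δ

lemma den_hasDerivAt_y (Δ x : ℝ) (y : ℝ) :
    HasDerivAt (fun y => Δ * (Real.cos (x/2) + Real.cos (y/2)))
      (Δ * (-Real.sin (y/2) * (1/2))) y := by
  have h := ((Real.hasDerivAt_cos (y/2)).comp y (half_hasDerivAt y)).const_add (Real.cos (x/2))
  exact h.const_mul Δ

lemma hone_deriv_x (Δx y : ℝ) (x : ℝ) (hd : Δx * (Real.cos (x/2) + Real.cos (y/2)) ≠ 0) :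
    deriv (fun x => hone Δx x y) x =
      (4 * (Real.cos (x/2) * (1/2)) * (Δx * (Real.cos (x/2) + Real.cos (y/2))) -
        4 * Real.sin (x/2) * (Δx * (-Real.sin (x/2) * (1/2)))) /
        (Δx * (Real.cos (x/2) + Real.cos (y/2)))^2 := by
  have hn : HasDerivAt (fun x => 4 * Real.sin (x/2)) (4 * (Real.cos (x/2) * (1/2))) x :=
    by have := ((Real.hasDerivAt_sin (x/2)).comp x (half_hasDerivAt x)).const_mul 4; exact this
  exact ((hn.div (den_hasDerivAt_x Δx y x) hd)).deriv

lemma hone_deriv_y (Δx x : ℝ) (y : ℝ) (hd : Δx * (Real.cos (x/2) + Real.cos (y/2)) ≠ 0) :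
    deriv (fun y => hone Δx x y) y =
      (0 * (Δx * (Real.cos (x/2) + Real.cos (y/2))) -
        4 * Real.sin (x/2) * (Δx * (-Real.sin (y/2) * (1/2)))) /
        (Δx * (Real.cos (x/2) + Real.cos (y/2)))^2 := by
  have hn : HasDerivAt (fun _ : ℝ => 4 * Real.sin (x/2)) 0 y := hasDerivAt_const y _
  exact ((hn.div (den_hasDerivAt_y Δx x y) hd)).deriv

lemma htwo_deriv_x (Δt y : ℝ) (x : ℝ) (hd : Δt * (Real.cos (x/2) + Real.cos (y/2)) ≠ 0) :
    deriv (fun x => htwo Δt x y) x =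
      (0 * (Δt * (Real.cos (x/2) + Real.cos (y/2))) -
        4 * Real.sin (y/2) * (Δt * (-Real.sin (x/2) * (1/2)))) /
        (Δt * (Real.cos (x/2) + Real.cos (y/2)))^2 := by
  have hn : HasDerivAt (fun _ : ℝ => 4 * Real.sin (y/2)) 0 x := hasDerivAt_const x _
  exact ((hn.div (den_hasDerivAt_x Δt y x) hd)).deriv

lemma htwo_deriv_y (Δt x : ℝ) (y : ℝ) (hd : Δt * (Real.cos (x/2) + Real.cos (y/2)) ≠ 0) :
    deriv (fun y => htwo Δt x y) y =
      (4 * (Real.cos (y/2) * (1/2)) * (Δt * (Real.cos (x/2) + Real.cos (y/2))) -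
        4 * Real.sin (y/2) * (Δt * (-Real.sin (y/2) * (1/2)))) /
        (Δt * (Real.cos (x/2) + Real.cos (y/2)))^2 := by
  have hn : HasDerivAt (fun y => 4 * Real.sin (y/2)) (4 * (Real.cos (y/2) * (1/2))) y :=
    by have := ((Real.hasDerivAt_sin (y/2)).comp y (half_hasDerivAt y)).const_mul 4; exact this
  exact ((hn.div (den_hasDerivAt_y Δt x y) hd)).deriv
lemma sin_half_ne {x : ℝ} (hx : x ∈ Set.Ioo (-π) π) :
    Real.sin (x/2) ≠ -1 ∧ Real.sin (x/2) ≠ 1 := by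
  have hc : 0 < Real.cos (x/2) := cos_half_pos hx
  have hp := Real.sin_sq_add_cos_sq (x/2)
  constructor <;> intro h <;> rw [h] at hp <;> nlinarith

/-- On `U = (−π, π) × (−π, π)` the map `h` is injective, differentiable with
everywhere nonvanishing Jacobian determinant, and is a diffeomorphism from `U`
onto its image `h(U)`. -/
theorem hmap_diffeomorphism (Δx Δt : ℝ) (hΔx : 0 < Δx) (hΔt : 0 < Δt) :
    Set.InjOn (hmap Δx Δt) (Set.Ioo (-π) π ×ˢ Set.Ioo (-π) π) ∧
    (∀ p ∈ Set.Ioo (-π) π ×ˢ Set.Ioo (-π) π, DifferentiableAt ℝ (hmap Δx Δt) p) ∧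
    (∀ p ∈ Set.Ioo (-π) π ×ˢ Set.Ioo (-π) π,
      (Matrix.det
        !![deriv (fun x => hone Δx x p.2) p.1, deriv (fun y => hone Δx p.1 y) p.2;
           deriv (fun x => htwo Δt x p.2) p.1, deriv (fun y => htwo Δt p.1 y) p.2]) ≠ 0) ∧
    (∃ g : ℝ × ℝ → ℝ × ℝ,
      Set.EqOn (g ∘ hmap Δx Δt) id (Set.Ioo (-π) π ×ˢ Set.Ioo (-π) π) ∧
      Set.EqOn (hmap Δx Δt ∘ g) id (hmap Δx Δt '' (Set.Ioo (-π) π ×ˢ Set.Ioo (-π) π)) ∧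
      DifferentiableOn ℝ g (hmap Δx Δt '' (Set.Ioo (-π) π ×ˢ Set.Ioo (-π) π))) := by
  refine ⟨?_, ?_, ?_, ginv Δx Δt, ?_, ?_, ?_⟩
  · -- injectivity
    intro p hp q hq h
    have hp' := ginv_hmap Δx Δt hΔx hΔt hp
    rw [h, ginv_hmap Δx Δt hΔx hΔt hq] at hp'
    exact hp'.symm
  · -- differentiability
    intro p hp
    have hc1 : 0 < Real.cos (p.1/2) := cos_half_pos hp.1
    have hc2 : 0 < Real.cos (p.2/2) := cos_half_pos hp.2
    have hd1 : Δx * (Real.cos (p.1/2) + Real.cos (p.2/2)) ≠ 0 := by positivity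
    have hd2 : Δt * (Real.cos (p.1/2) + Real.cos (p.2/2)) ≠ 0 := by positivity
    have num1 : DifferentiableAt ℝ (fun p : ℝ × ℝ => 4 * Real.sin (p.1/2)) p := by fun_prop
    have num2 : DifferentiableAt ℝ (fun p : ℝ × ℝ => 4 * Real.sin (p.2/2)) p := by fun_prop
    have den1 : DifferentiableAt ℝ (fun p : ℝ × ℝ => Δx * (Real.cos (p.1/2) + Real.cos (p.2/2))) p := by fun_prop
    have den2 : DifferentiableAt ℝ (fun p : ℝ × ℝ => Δt * (Real.cos (p.1/2) + Real.cos (p.2/2))) p := by fun_prop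
    have h1 : DifferentiableAt ℝ (fun p : ℝ × ℝ => hone Δx p.1 p.2) p := by
      simp only [hone, div_eq_mul_inv]
      exact num1.mul (den1.inv hd1)
    have h2 : DifferentiableAt ℝ (fun p : ℝ × ℝ => htwo Δt p.1 p.2) p := by
      simp only [htwo, div_eq_mul_inv]
      exact num2.mul (den2.inv hd2)
    exact h1.prodMk h2
  · -- determinant
    intro p hp
    have hc1 : 0 < Real.cos (p.1/2) := cos_half_pos hp.1
    have hc2 : 0 < Real.cos (p.2/2) := cos_half_pos hp.2
    have hd1 : Δx * (Real.cos (p.1/2) + Real.cos (p.2/2)) ≠ 0 := by positivity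
    have hd2 : Δt * (Real.cos (p.1/2) + Real.cos (p.2/2)) ≠ 0 := by positivity
    rw [Matrix.det_fin_two_of, hone_deriv_x Δx p.2 p.1 hd1, hone_deriv_y Δx p.1 p.2 hd1,
      htwo_deriv_x Δt p.2 p.1 hd2, htwo_deriv_y Δt p.1 p.2 hd2]
    set s₁ := Real.sin (p.1/2)
    set s₂ := Real.sin (p.2/2)
    set c₁ := Real.cos (p.1/2)
    set c₂ := Real.cos (p.2/2)
    have h1 : s₁^2 + c₁^2 = 1 := Real.sin_sq_add_cos_sq (p.1/2)
    have h2 : s₂^2 + c₂^2 = 1 := Real.sin_sq_add_cos_sq (p.2/2)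
    rw [div_mul_div_comm, div_mul_div_comm, div_sub_div_same]
    have hnum : (4 * (c₁ * (1/2)) * (Δx * (c₁ + c₂)) - 4 * s₁ * (Δx * (-s₁ * (1/2)))) *
          (4 * (c₂ * (1/2)) * (Δt * (c₁ + c₂)) - 4 * s₂ * (Δt * (-s₂ * (1/2)))) -
        (0 * (Δx * (c₁ + c₂)) - 4 * s₁ * (Δx * (-s₂ * (1/2)))) *
          (0 * (Δt * (c₁ + c₂)) - 4 * s₂ * (Δt * (-s₁ * (1/2)))) =
        4 * Δx * Δt * (c₁ + c₂)^2 := by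
      linear_combination (4*Δx*Δt*c₂*(c₁+c₂)) * h1 + (4*Δx*Δt*c₁*(c₁+c₂)) * h2
    rw [hnum]
    apply div_ne_zero (by positivity) (by positivity)
  · -- left inverse
    intro p hp
    exact ginv_hmap Δx Δt hΔx hΔt hp
  · -- right inverse on image
    rintro q ⟨p, hp, rfl⟩
    simp only [Function.comp_apply, id_eq]
    rw [ginv_hmap Δx Δt hΔx hΔt hp]
  · -- differentiability of g on image
    rintro q ⟨p, hp, rfl⟩
    apply DifferentiableAt.differentiableWithinAt
    obtain ⟨hv1, hv2⟩ := key_vals Δx Δt hΔx hΔt hp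
    set q := hmap Δx Δt p with hq
    have hFpos : ∀ r : ℝ × ℝ,
        0 < (1 + (Δx * r.1 / 4 - Δt * r.2 / 4)^2) * (1 + (Δx * r.1 / 4 + Δt * r.2 / 4)^2) := by
      intro r; positivity
    have hFdiff : DifferentiableAt ℝ (fun r : ℝ × ℝ =>
        (1 + (Δx * r.1 / 4 - Δt * r.2 / 4)^2) * (1 + (Δx * r.1 / 4 + Δt * r.2 / 4)^2)) q := by
      fun_prop
    have hsdiff : DifferentiableAt ℝ (fun r : ℝ × ℝ =>
        Real.sqrt ((1 + (Δx * r.1 / 4 - Δt * r.2 / 4)^2) * (1 + (Δx * r.1 / 4 + Δt * r.2 / 4)^2))) q :=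
      hFdiff.sqrt (hFpos q).ne'
    have hsne : Real.sqrt ((1 + (Δx * q.1 / 4 - Δt * q.2 / 4)^2) *
        (1 + (Δx * q.1 / 4 + Δt * q.2 / 4)^2)) ≠ 0 :=
      (Real.sqrt_pos.mpr (hFpos q)).ne'
    have hdiv : DifferentiableAt ℝ (fun r : ℝ × ℝ => 2 / Real.sqrt
        ((1 + (Δx * r.1 / 4 - Δt * r.2 / 4)^2) * (1 + (Δx * r.1 / 4 + Δt * r.2 / 4)^2))) q :=
 by
      simp only [div_eq_mul_inv]
      exact (differentiableAt_const (2:ℝ)).mul (hsdiff.inv hsne)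
    have hf1 : DifferentiableAt ℝ (fun r : ℝ × ℝ => Δx * r.1 / 4 * (2 / Real.sqrt
        ((1 + (Δx * r.1 / 4 - Δt * r.2 / 4)^2) * (1 + (Δx * r.1 / 4 + Δt * r.2 / 4)^2)))) q :=
      DifferentiableAt.mul (by fun_prop) hdiv
    have hf2 : DifferentiableAt ℝ (fun r : ℝ × ℝ => Δt * r.2 / 4 * (2 / Real.sqrt
        ((1 + (Δx * r.1 / 4 - Δt * r.2 / 4)^2) * (1 + (Δx * r.1 / 4 + Δt * r.2 / 4)^2)))) q :=
      DifferentiableAt.mul (by fun_prop) hdiv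
    obtain ⟨hn1, hn1'⟩ := sin_half_ne hp.1
    obtain ⟨hn2, hn2'⟩ := sin_half_ne hp.2
    have ha1 : DifferentiableAt ℝ Real.arcsin (Δx * q.1 / 4 * (2 / Real.sqrt
        ((1 + (Δx * q.1 / 4 - Δt * q.2 / 4)^2) * (1 + (Δx * q.1 / 4 + Δt * q.2 / 4)^2)))) := by
      rw [hv1]
      exact Real.differentiableAt_arcsin.mpr ⟨hn1, hn1'⟩
    have ha2 : DifferentiableAt ℝ Real.arcsin (Δt * q.2 / 4 * (2 / Real.sqrt
        ((1 + (Δx * q.1 / 4 - Δt * q.2 / 4)^2) * (1 + (Δx * q.1 / 4 + Δt * q.2 / 4)^2)))) := by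
      rw [hv2]
      exact Real.differentiableAt_arcsin.mpr ⟨hn2, hn2'⟩
    exact ((ha1.comp q hf1).const_mul 2).prodMk ((ha2.comp q hf2).const_mul 2)
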